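/- For every natural number n, the alternating sum of cubes of binomial coefficients satisfies: ∑_{s=0}^{n} (-1)^s (binom(n,s))^3 = 0 if n is odd, and ∑_{s=0}^{n} (-1)^s (binom(n,s))^3 = (-1)^{n/2} · (3n/2)! / ((n/2)!)^3 if n is even. -/

import Mathlib

namespace DixonAux

/-- Binomial coefficient with integer lower index, ℚ-valued. -/
def ch (m : ℕ) (i : ℤ) : ℚ := if 0 ≤ i then (m.choose i.toNat : ℚ) else 0

lemma ch_congr (m : ℕ) {i j : ℤ} (h : i = j) : ch m i = ch m j := by rw [h]

lemma ch_ofNat (m j : ℕ) : ch m (j : ℤ) = (m.choose j : ℚ) := by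
  simp [ch]

lemma ch_neg {m : ℕ} {i : ℤ} (h : i < 0) : ch m i = 0 := by
  simp [ch, not_le.2 h]

lemma ch_gt {m : ℕ} {i : ℤ} (h : (m : ℤ) < i) : ch m i = 0 := by
  rcases le_or_gt 0 i with h0 | h0
  · have : m < i.toNat := by omega
    simp [ch, h0, Nat.choose_eq_zero_of_lt this]
  · exact ch_neg h0

/-- Pascal's rule, valid for all integer indices. -/
lemma ch_pascal (m : ℕ) (i : ℤ) : ch (m + 1) (i + 1) = ch m (i + 1) + ch m i := by
  rcases lt_trichotomy i (-1) with h | h | h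
  · rw [ch_neg (by omega), ch_neg (by omega), ch_neg (by omega)]; ring
  · subst h
    have h1 : ch m (-1 + 1) = ch m 0 := ch_congr m (by ring)
    have h2 : ch (m+1) (-1 + 1) = ch (m+1) 0 := ch_congr (m+1) (by ring)
    rw [h1, h2, ch_neg (by norm_num : (-1 : ℤ) < 0)]
    simp [ch]
  · obtain ⟨j, rfl⟩ : ∃ j : ℕ, i = (j : ℤ) := ⟨i.toNat, by omega⟩
    have h1 : ((j : ℤ) + 1) = ((j + 1 : ℕ) : ℤ) := by push_cast; ring
    rw [h1, ch_ofNat, ch_ofNat, ch_ofNat, Nat.choose_succ_succ']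
    push_cast; ring

/-- Absorption identity `(i+1) * C(m, i+1) = (m - i) * C(m, i)`, all integer `i`. -/
lemma ch_absorb (m : ℕ) (i : ℤ) :
    ((i : ℚ) + 1) * ch m (i + 1) = ((m : ℚ) - (i : ℚ)) * ch m i := by
  rcases lt_trichotomy i (-1) with h | h | h
  · rw [ch_neg (by omega), ch_neg (by omega)]; ring
  · subst h
    have h2 : ch m (-1 + 1) = ch m 0 := ch_congr m (by ring)
    rw [h2, ch_neg (by norm_num : (-1 : ℤ) < 0)]
    push_cast; ring
  · obtain ⟨j, rfl⟩ : ∃ j : ℕ, i = (j : ℤ) := ⟨i.toNat, by omega⟩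
    have h1 : ((j : ℤ) + 1) = ((j + 1 : ℕ) : ℤ) := by push_cast; ring
    rw [h1, ch_ofNat, ch_ofNat]
    rcases le_or_gt (j + 1) m with hj | hj
    · have hcast := congrArg (fun t : ℕ => (t : ℚ)) (Nat.choose_succ_right_eq m j)
      push_cast [Nat.cast_sub (by omega : j ≤ m)] at hcast
      push_cast
      linarith [hcast]
    · rcases Nat.lt_or_ge m j with hmj | hmj
      · rw [Nat.choose_eq_zero_of_lt (by omega : m < j + 1),
          Nat.choose_eq_zero_of_lt hmj]
        ring
      · have hm : m = j := by omega
        subst hm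
        rw [Nat.choose_eq_zero_of_lt (by omega : m < m + 1)]
        push_cast; ring

/-- `(m + 1 - i) * C(m+1, i) = (m+1) * C(m, i)`, all integer `i`. -/
lemma ch_absorb' (m : ℕ) (i : ℤ) :
    ((m : ℚ) + 1 - (i : ℚ)) * ch (m + 1) i = ((m : ℚ) + 1) * ch m i := by
  rcases lt_or_ge i 0 with h | h
  · rw [ch_neg h, ch_neg h]; ring
  · obtain ⟨j, rfl⟩ : ∃ j : ℕ, i = (j : ℤ) := ⟨i.toNat, by omega⟩
    rw [ch_ofNat, ch_ofNat]
    rcases le_or_gt j m with hj | hj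
    · have hcast := congrArg (fun t : ℕ => (t : ℚ)) (Nat.choose_mul_succ_eq m j)
      push_cast [Nat.cast_sub (by omega : j ≤ m + 1)] at hcast
      push_cast
      linarith [hcast]
    · rcases Nat.lt_or_ge (m + 1) j with hmj | hmj
      · rw [Nat.choose_eq_zero_of_lt (by omega : m + 1 < j),
          Nat.choose_eq_zero_of_lt hj]
        ring
      · have hm : j = m + 1 := by omega
        subst hm
        rw [Nat.choose_eq_zero_of_lt (by omega : m < m + 1)]
        push_cast; ring

variable (b c : ℕ)

/-- The generalized Dixon summand. -/
def dterm (n : ℕ) (k : ℤ) : ℚ :=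
  (-1 : ℚ) ^ k * ch (n + b) ((n : ℤ) + k) * ch (b + c) ((b : ℤ) + k) * ch (c + n) ((c : ℤ) + k)

/-- The WZ certificate term. -/
def hterm (n : ℕ) (k : ℤ) : ℚ :=
  (-1 : ℚ) ^ k * (-(((b : ℚ) + k) * ((c : ℚ) + k))) *
    ch (n + b) ((n : ℤ) + k) * ch (b + c) ((b : ℤ) + k) * ch (c + n + 1) ((c : ℤ) + k)

lemma neg_one_zpow_add_one (k : ℤ) : (-1 : ℚ) ^ (k + 1) = -((-1 : ℚ) ^ k) := by
  rw [zpow_add_one₀ (by norm_num : (-1 : ℚ) ≠ 0)]; ring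

/-- The pointwise WZ identity. -/
lemma wz (n : ℕ) (k : ℤ) :
    2 * ((c : ℚ) + n + 1) *
        (((n : ℚ) + 1) * dterm b c (n + 1) k - ((n : ℚ) + b + c + 1) * dterm b c n k) =
      hterm b c n (k + 1) - hterm b c n k := by
  set P := ch (n + b) ((n : ℤ) + k) with hP
  set P2 := ch (n + b) ((n : ℤ) + k + 1) with hP2
  set Q := ch (b + c) ((b : ℤ) + k) with hQ
  set Q2 := ch (b + c) ((b : ℤ) + k + 1) with hQ2
  set R := ch (c + n) ((c : ℤ) + k) with hR
  set R2 := ch (c + n) ((c : ℤ) + k + 1) with hR2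
  set RR := ch (c + n + 1) ((c : ℤ) + k) with hRR
  have e3 : ((n : ℚ) + k + 1) * P2 = ((b : ℚ) - k) * P := by
    have := ch_absorb (n + b) ((n : ℤ) + k)
    push_cast at this
    linear_combination this
  have e4 : ((b : ℚ) + k + 1) * Q2 = ((c : ℚ) - k) * Q := by
    have := ch_absorb (b + c) ((b : ℤ) + k)
    push_cast at this
    linear_combination this
  have e5 : ((c : ℚ) + k + 1) * R2 = ((n : ℚ) - k) * R := by
    have := ch_absorb (c + n) ((c : ℤ) + k)
    push_cast at this
    linear_combination this
  have e6 : ((n : ℚ) + 1 - k) * RR = ((c : ℚ) + n + 1) * R := by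
    have := ch_absorb' (c + n) ((c : ℤ) + k)
    push_cast at this
    linear_combination this
  have hA : ch (n + 1 + b) ((n + 1 : ℕ) + k) = P2 + P := by
    rw [show n + 1 + b = (n + b) + 1 from by omega,
      ch_congr ((n+b)+1) (show ((n + 1 : ℕ) : ℤ) + k = ((n : ℤ) + k) + 1 from by push_cast; ring),
      ch_pascal]
  have hB : ch (c + (n + 1)) ((c : ℤ) + k) = RR := by
    rw [show c + (n + 1) = c + n + 1 from by omega]
  have hC : ch (n + b) ((n : ℤ) + (k + 1)) = P2 :=
    ch_congr _ (by ring)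
  have hD : ch (b + c) ((b : ℤ) + (k + 1)) = Q2 :=
    ch_congr _ (by ring)
  have hE : ch (c + n + 1) ((c : ℤ) + (k + 1)) = R2 + R := by
    rw [ch_congr (c+n+1) (show (c : ℤ) + (k + 1) = ((c : ℤ) + k) + 1 from by ring), ch_pascal]
  simp only [dterm, hterm, neg_one_zpow_add_one, hA, hB, hC, hD, hE, ← hP, ← hQ, ← hR, ← hRR]
  push_cast
  set s := (-1 : ℚ) ^ k with hs
  linear_combination s *
    ( (-(↑k - (c : ℚ) - 2 * n - 2)) * Q * RR * e3
      - (((c : ℚ) + k + 1) * (R2 + R) * P2) * e4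
      - (((c : ℚ) - k) * P2 * Q) * e5
      + (2 * ((n : ℚ) + b + c + 1) * P * Q + ((c : ℚ) - k) * P2 * Q) * e6 )


/-- The generalized Dixon sum. -/
def S (n : ℕ) : ℚ := ∑ j ∈ Finset.range (b + c + 1), dterm b c n ((j : ℤ) - b)

lemma hterm_left (n : ℕ) : hterm b c n (0 - (b : ℤ)) = 0 := by
  have : ((b : ℚ) + ((0 : ℤ) - (b : ℤ)) : ℚ) = 0 := by push_cast; ring
  simp only [hterm, this]
  push_cast
  ring

lemma hterm_right (n : ℕ) : hterm b c n ((b + c + 1 : ℕ) - (b : ℤ)) = 0 := by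
  have hz : ch (b + c) ((b : ℤ) + (((b + c + 1 : ℕ) : ℤ) - b)) = 0 :=
    ch_gt (by push_cast; omega)
  simp only [hterm, hz]
  ring

lemma step (n : ℕ) : ((n : ℚ) + 1) * S b c (n + 1) = ((n : ℚ) + b + c + 1) * S b c n := by
  have key : 2 * ((c : ℚ) + n + 1) *
      (((n : ℚ) + 1) * S b c (n + 1) - ((n : ℚ) + b + c + 1) * S b c n) = 0 := by
    have := Finset.sum_range_sub (fun j => hterm b c n ((j : ℤ) - b)) (b + c + 1)
    calc 2 * ((c : ℚ) + n + 1) *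
        (((n : ℚ) + 1) * S b c (n + 1) - ((n : ℚ) + b + c + 1) * S b c n)
        = ∑ j ∈ Finset.range (b + c + 1),
            (hterm b c n (((j : ℤ) - b) + 1) - hterm b c n ((j : ℤ) - b)) := by
          simp only [S, Finset.mul_sum, ← Finset.sum_sub_distrib]
          exact Finset.sum_congr rfl fun j _ => wz b c n ((j : ℤ) - b)
      _ = ∑ j ∈ Finset.range (b + c + 1),
            (hterm b c n (((j + 1 : ℕ) : ℤ) - b) - hterm b c n ((j : ℤ) - b)) := by
          refine Finset.sum_congr rfl fun j _ => ?_
          congr 1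
          exact congrArg _ (by push_cast; ring)
      _ = hterm b c n (((b + c + 1 : ℕ) : ℤ) - b) - hterm b c n (((0 : ℕ) : ℤ) - b) := this
      _ = 0 := by
          rw [hterm_right]
          rw [show (((0 : ℕ) : ℤ) - (b : ℤ)) = 0 - (b : ℤ) from by push_cast; ring, hterm_left]
          ring
  have hne : 2 * ((c : ℚ) + n + 1) ≠ 0 := by positivity
  have := mul_eq_zero.1 key
  rcases this with h | h
  · exact absurd h hne
  · linarith

lemma S_zero : S b c 0 = ((b + c).choose b : ℚ) := by
  rw [S]
  rw [Finset.sum_eq_single b]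
  · simp only [dterm]
    have h1 : ((0 : ℕ) : ℤ) + ((b : ℤ) - b) = ((0 : ℕ) : ℤ) := by push_cast; ring
    have h2 : (b : ℤ) + ((b : ℤ) - b) = ((b : ℕ) : ℤ) := by ring
    have h3 : (c : ℤ) + ((b : ℤ) - b) = ((c : ℕ) : ℤ) := by ring
    rw [ch_congr _ h1, ch_congr _ h2, ch_congr _ h3, ch_ofNat, ch_ofNat, ch_ofNat]
    rw [show (((b : ℤ) - b) : ℤ) = 0 from by ring]
    simp
  · intro j _ hj
    rcases Nat.lt_or_ge j b with hjb | hjb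
    · simp only [dterm]
      have : ch (0 + b) (((0 : ℕ) : ℤ) + ((j : ℤ) - b)) = 0 := ch_neg (by push_cast; omega)
      rw [this]; ring
    · have hjb' : b < j := by omega
      simp only [dterm]
      have : ch (c + 0) ((c : ℤ) + ((j : ℤ) - b)) = 0 := ch_gt (by push_cast; omega)
      rw [this]; ring
  · intro h
    exact absurd (Finset.mem_range.2 (by omega)) h

lemma S_val (n : ℕ) : S b c n =
    ((n + b + c).factorial : ℚ) / (n.factorial * b.factorial * c.factorial) := by
  induction n with
  | zero =>
    rw [S_zero, Nat.cast_choose ℚ (by omega : b ≤ b + c),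
      show b + c - b = c from by omega, show 0 + b + c = b + c from by omega]
    simp [Nat.factorial_zero]
  | succ n ih =>
    have hstep := step b c n
    rw [ih] at hstep
    have hn1 : ((n : ℚ) + 1) ≠ 0 := by positivity
    have hfacs : (n.factorial : ℚ) ≠ 0 := Nat.cast_ne_zero.2 n.factorial_ne_zero
    have hfb : (b.factorial : ℚ) ≠ 0 := Nat.cast_ne_zero.2 b.factorial_ne_zero
    have hfc : (c.factorial : ℚ) ≠ 0 := Nat.cast_ne_zero.2 c.factorial_ne_zero
    have hstep' : ((n:ℚ)+1) * S b c (n+1) * (n.factorial * b.factorial * c.factorial)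
        = ((n:ℚ)+b+c+1) * ((n+b+c).factorial : ℚ) := by
      rw [hstep]; field_simp
    rw [show (n + 1) + b + c = (n + b + c) + 1 from by omega,
      Nat.factorial_succ ((n+b+c)), Nat.factorial_succ n]
    push_cast
    rw [eq_div_iff (by positivity)]
    linear_combination hstep' 


lemma even_case (m : ℕ) :
    (∑ s ∈ Finset.range (2 * m + 1), (-1 : ℚ) ^ s * ((2 * m).choose s : ℚ) ^ 3) =
      (-1 : ℚ) ^ m * ((3 * m).factorial : ℚ) / ((m.factorial : ℚ)) ^ 3 := by
  have hS := S_val m m m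
  have hterm : ∀ j ∈ Finset.range (m + m + 1),
      dterm m m m ((j : ℤ) - m) = (-1 : ℚ) ^ m * ((-1 : ℚ) ^ j * ((2 * m).choose j : ℚ) ^ 3) := by
    intro j _
    have harg : ∀ (t : ℕ), (t : ℤ) + ((j : ℤ) - m) = (t + j - m : ℤ) := fun t => by ring
    have hch : ∀ (t : ℕ), t = m → ch (t + m) ((t : ℤ) + ((j : ℤ) - m)) = ((2 * m).choose j : ℚ) := by
      rintro t rfl
      rw [ch_congr _ (show (t : ℤ) + ((j : ℤ) - t) = ((j : ℕ) : ℤ) from by ring), ch_ofNat,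
        show t + t = 2 * t from by omega]
    have hsgn : (-1 : ℚ) ^ ((j : ℤ) - (m : ℤ)) = (-1 : ℚ) ^ m * (-1 : ℚ) ^ j := by
      rw [zpow_sub₀ (by norm_num : (-1 : ℚ) ≠ 0), zpow_natCast, zpow_natCast, div_eq_mul_inv,
        ← inv_pow]
      norm_num
      ring
    simp only [dterm, hch m rfl, hsgn]
    ring
  have hSsum : S m m m = (-1 : ℚ) ^ m *
      ∑ j ∈ Finset.range (2 * m + 1), (-1 : ℚ) ^ j * ((2 * m).choose j : ℚ) ^ 3 := by
    rw [S, Finset.sum_congr rfl hterm, ← Finset.mul_sum, show m + m + 1 = 2 * m + 1 from by omega]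
  have hmm : (-1 : ℚ) ^ m * (-1 : ℚ) ^ m = 1 := by
    rw [← pow_add]
    exact Even.neg_one_pow ⟨m, by omega⟩
  have h3 : m + m + m = 3 * m := by omega
  rw [h3] at hS
  have h4 : (-1 : ℚ) ^ m *
      (∑ j ∈ Finset.range (2 * m + 1), (-1 : ℚ) ^ j * ((2 * m).choose j : ℚ) ^ 3)
      = ((3 * m).factorial : ℚ) / (m.factorial * m.factorial * m.factorial : ℚ) := by
    rw [← hSsum, hS]
  calc (∑ s ∈ Finset.range (2 * m + 1), (-1 : ℚ) ^ s * ((2 * m).choose s : ℚ) ^ 3)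
      = ((-1 : ℚ) ^ m * (-1 : ℚ) ^ m) *
        ∑ s ∈ Finset.range (2 * m + 1), (-1 : ℚ) ^ s * ((2 * m).choose s : ℚ) ^ 3 := by
        rw [hmm]; ring
    _ = (-1 : ℚ) ^ m * (((3 * m).factorial : ℚ) / (m.factorial * m.factorial * m.factorial : ℚ)) := by
        rw [mul_assoc, h4]
    _ = (-1 : ℚ) ^ m * ((3 * m).factorial : ℚ) / ((m.factorial : ℚ)) ^ 3 := by
        ring

end DixonAux

/-- **Dixon's identity.** The alternating sum of cubes of binomial coefficients. -/
theorem dixon_identity (n : ℕ) :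
    (∑ s ∈ Finset.range (n + 1), (-1 : ℤ) ^ s * (n.choose s : ℤ) ^ 3) =
      if Odd n then 0
      else (-1 : ℤ) ^ (n / 2) * ((3 * n / 2).factorial / ((n / 2).factorial) ^ 3 : ℕ) := by
  by_cases hodd : Odd n
  · rw [if_pos hodd]
    set f : ℕ → ℤ := fun s => (-1 : ℤ) ^ s * (n.choose s : ℤ) ^ 3 with hf
    have hrefl := Finset.sum_range_reflect f (n + 1)
    have hneg : ∀ j ∈ Finset.range (n + 1), f (n + 1 - 1 - j) = -f j := by
      intro j hj
      have hjn : j ≤ n := by simpa [Nat.lt_succ_iff] using hj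
      have h0 : n + 1 - 1 - j = n - j := by omega
      have h1 : (-1 : ℤ) ^ (n - j) * (-1 : ℤ) ^ j = -1 := by
        rw [← pow_add, Nat.sub_add_cancel hjn]
        exact hodd.neg_one_pow
      have h2 : (-1 : ℤ) ^ j * (-1 : ℤ) ^ j = 1 := by
        rw [← pow_add]
        exact Even.neg_one_pow ⟨j, by omega⟩
      have h3 : (-1 : ℤ) ^ (n - j) = -(-1 : ℤ) ^ j := by
        linear_combination ((-1 : ℤ) ^ j) * h1 - ((-1 : ℤ) ^ (n - j)) * h2
      rw [hf]
      simp only [h0, h3, Nat.choose_symm hjn]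
      ring
    rw [Finset.sum_congr rfl hneg] at hrefl
    rw [Finset.sum_neg_distrib] at hrefl
    linarith [hrefl]
  · rw [if_neg hodd]
    have heven : Even n := Nat.not_odd_iff_even.1 hodd
    obtain ⟨m, hm⟩ := heven
    have hn2 : n = 2 * m := by omega
    subst hn2
    have hdiv2 : 2 * m / 2 = m := by omega
    have hdiv32 : 3 * (2 * m) / 2 = 3 * m := by omega
    rw [hdiv2, hdiv32]
    have hdvd : (m.factorial) ^ 3 ∣ (3 * m).factorial := by
      have h1 : m.factorial * m.factorial ∣ (m + m).factorial :=
        Nat.factorial_mul_factorial_dvd_factorial_add m m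
      have h2 : (m + m).factorial * m.factorial ∣ (m + m + m).factorial :=
        Nat.factorial_mul_factorial_dvd_factorial_add (m + m) m
      have h3 : m.factorial ^ 3 = m.factorial * m.factorial * m.factorial := by ring
      rw [h3, show m + m + m = 3 * m from by omega] at *
      exact dvd_trans (mul_dvd_mul h1 dvd_rfl) h2
    have hq := DixonAux.even_case m
    have hcast : (((3 * m).factorial / (m.factorial) ^ 3 : ℕ) : ℚ)
        = ((3 * m).factorial : ℚ) / ((m.factorial : ℚ)) ^ 3 := by
      rw [Nat.cast_div hdvd (by positivity)]
      push_cast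
      ring
    have final : ((∑ s ∈ Finset.range (2 * m + 1), (-1 : ℤ) ^ s * ((2 * m).choose s : ℤ) ^ 3 : ℤ) : ℚ)
        = (((-1 : ℤ) ^ m * (((3 * m).factorial / ((m.factorial)) ^ 3 : ℕ) : ℤ) : ℤ) : ℚ) := by
      rw [Int.cast_mul, Int.cast_pow, Int.cast_natCast, hcast]
      push_cast
      rw [hq]
      ring
    exact_mod_cast final
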